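/- arXiv:2006.15101 — 2 statements merged into one kernel-verified Lean document; each statement's English description precedes it below -/
import Mathlib

section
/- Fix an integer m ≥ 2 and a real number K with 1 ≤ K < m, and define f : ℂ → ℂ by f(0) = 0 and f(z) = z^m |z|^{−m(K−1)/K} for z ≠ 0. Then for every z ∈ ℂ with z ≠ 0, f is real-differentiable at z and the determinant of its real derivative satisfies det Df(z) = (m²/K) · |z|^{2(m−K)/K}. -/
open Metric Set

open Complex

lemma clm_det_eq' (L : ℂ →L[ℝ] ℂ) :
    L.det = (L 1).re * (L I).im - (L I).re * (L 1).im := by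
  rw [ContinuousLinearMap.det, ← LinearMap.det_toMatrix Complex.basisOneI,
    Matrix.det_fin_two]
  simp [LinearMap.toMatrix_apply, Complex.coe_basisOneI_repr, Complex.coe_basisOneI]

lemma hasFDerivAt_normSq' (z : ℂ) :
    HasFDerivAt Complex.normSq
      ((2 * z.re) • Complex.reCLM + (2 * z.im) • Complex.imCLM : ℂ →L[ℝ] ℝ) z := by
  have h1 := Complex.reCLM.hasFDerivAt (x := z)
  have h2 := Complex.imCLM.hasFDerivAt (x := z)
  have key := (h1.mul h1).add (h2.mul h2)
  have hfun : ((⇑Complex.reCLM) * (⇑Complex.reCLM)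
      + (⇑Complex.imCLM) * (⇑Complex.imCLM) : ℂ → ℝ) = Complex.normSq := by
    funext w; simp [Complex.normSq_apply]
  rw [hfun] at key
  refine key.congr_fderiv ?_
  ext w
  simp [Complex.reCLM_apply, Complex.imCLM_apply]
  ring

/-- Example 4.1 of the paper: the Jacobian determinant of
`f(z) = z^m |z|^{−m(K−1)/K}` equals `(m²/K)|z|^{2(m−K)/K}` at every `z ≠ 0`. -/
theorem jacobian_of_sharpness_example
    (m : ℕ) (hm : 2 ≤ m) (K : ℝ) (hK1 : 1 ≤ K) (hKm : K < m)
    (f : ℂ → ℂ) (hf0 : f 0 = 0)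
    (hf : ∀ z : ℂ, z ≠ 0 →
      f z = z ^ m * ((‖z‖ ^ (-((m : ℝ) * (K - 1) / K)) : ℝ) : ℂ)) :
    ∀ z : ℂ, z ≠ 0 → DifferentiableAt ℝ f z ∧
      (fderiv ℝ f z).det = ((m : ℝ) ^ 2 / K) * ‖z‖ ^ (2 * ((m : ℝ) - K) / K) := by
  intro z hz
  have hK0 : (0:ℝ) < K := lt_of_lt_of_le one_pos hK1
  set e : ℝ := -((m : ℝ) * (K - 1) / K) / 2 with he_def
  set n : ℝ := Complex.normSq z with hn_def
  have hn : 0 < n := Complex.normSq_pos.mpr hz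
  -- the smooth representative
  set g : ℂ → ℂ := fun w => w ^ m * ((Complex.normSq w ^ e : ℝ) : ℂ) with hg_def
  have hfg : f =ᶠ[nhds z] g := by
    filter_upwards [isOpen_compl_singleton.mem_nhds hz] with w hw
    have hw' : w ≠ 0 := hw
    have hnw : (0:ℝ) ≤ Complex.normSq w := Complex.normSq_nonneg w
    rw [hf w hw', hg_def]
    congr 2
    rw [Complex.norm_def, Real.sqrt_eq_rpow, ← Real.rpow_mul hnw]
    congr 1
    ring
  -- derivative of g
  set D : ℂ →L[ℝ] ℂ :=
      ((z ^ m • (Complex.ofRealCLM.comp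
          ((e * n ^ (e - 1)) •
            ((2 * z.re) • Complex.reCLM + (2 * z.im) • Complex.imCLM : ℂ →L[ℝ] ℝ))) +
        (((n ^ e : ℝ) : ℂ)) •
          (((ContinuousLinearMap.smulRight (1 : ℂ →L[ℂ] ℂ)
            ((m : ℂ) * z ^ (m - 1))).restrictScalars ℝ))) : ℂ →L[ℝ] ℂ) with hD_def
  have hgD : HasFDerivAt g D z := by
    have hrpow : HasDerivAt (fun t : ℝ => t ^ e) (e * n ^ (e - 1)) n :=
      Real.hasDerivAt_rpow_const (Or.inl hn.ne')
    have h2 : HasFDerivAt (fun w : ℂ => ((Complex.normSq w ^ e : ℝ) : ℂ))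
        (Complex.ofRealCLM.comp ((e * n ^ (e - 1)) •
          ((2 * z.re) • Complex.reCLM + (2 * z.im) • Complex.imCLM : ℂ →L[ℝ] ℝ))) z :=
      by have := hrpow.comp_hasFDerivAt z (hasFDerivAt_normSq' z); exact Complex.ofRealCLM.hasFDerivAt.comp z this
    have h1 : HasFDerivAt (fun w : ℂ => w ^ m)
        ((ContinuousLinearMap.smulRight (1 : ℂ →L[ℂ] ℂ)
          ((m : ℂ) * z ^ (m - 1))).restrictScalars ℝ) z :=
      (hasDerivAt_pow m z).hasFDerivAt.restrictScalars ℝ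
    exact h1.mul h2
  have hfD : HasFDerivAt f D z := hgD.congr_of_eventuallyEq hfg
  refine ⟨hfD.differentiableAt, ?_⟩
  rw [hfD.fderiv, clm_det_eq']
  -- evaluate D at 1 and I
  have hD1 : D 1 = z ^ m * ((e * n ^ (e - 1) * (2 * z.re) : ℝ) : ℂ)
      + ((n ^ e : ℝ) : ℂ) * ((m : ℂ) * z ^ (m - 1)) := by
    simp only [hD_def, ContinuousLinearMap.add_apply, ContinuousLinearMap.smul_apply,
      ContinuousLinearMap.comp_apply, ContinuousLinearMap.coe_restrictScalars',
      ContinuousLinearMap.smulRight_apply, ContinuousLinearMap.one_apply,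
      Complex.ofRealCLM_apply, Complex.reCLM_apply, Complex.imCLM_apply,
      smul_eq_mul, Complex.real_smul, Complex.ofReal_mul, Complex.one_re, Complex.one_im]
    push_cast
    ring
  have hDI : D I = z ^ m * ((e * n ^ (e - 1) * (2 * z.im) : ℝ) : ℂ)
      + ((n ^ e : ℝ) : ℂ) * ((m : ℂ) * z ^ (m - 1) * I) := by
    simp only [hD_def, ContinuousLinearMap.add_apply, ContinuousLinearMap.smul_apply,
      ContinuousLinearMap.comp_apply, ContinuousLinearMap.coe_restrictScalars',
      ContinuousLinearMap.smulRight_apply, ContinuousLinearMap.one_apply,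
      Complex.ofRealCLM_apply, Complex.reCLM_apply, Complex.imCLM_apply,
      smul_eq_mul, Complex.real_smul, Complex.ofReal_mul, Complex.I_re, Complex.I_im]
    push_cast
    ring
  have hzm : z ^ m = z ^ (m - 1) * z := by
    rw [← pow_succ]; congr 1; omega
  have hxy : z.re ^ 2 + z.im ^ 2 = n := by
    rw [hn_def, Complex.normSq_apply]; ring
  have hPQ : (z ^ (m - 1)).re ^ 2 + (z ^ (m - 1)).im ^ 2 = n ^ ((m - 1 : ℕ) : ℝ) := by
    have h1 : (z ^ (m - 1)).re ^ 2 + (z ^ (m - 1)).im ^ 2 = Complex.normSq (z ^ (m - 1)) := by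
      rw [Complex.normSq_apply]; ring
    rw [h1, map_pow, ← Real.rpow_natCast (Complex.normSq z) (m - 1)]
  have key : (D 1).re * (D I).im - (D I).re * (D 1).im
      = ((z ^ (m - 1)).re ^ 2 + (z ^ (m - 1)).im ^ 2) *
        ((m : ℝ) ^ 2 * (n ^ e) ^ 2
          + 2 * e * (m : ℝ) * (n ^ e * n ^ (e - 1) * (z.re ^ 2 + z.im ^ 2))) := by
    rw [hD1, hDI, hzm]
    simp only [Complex.add_re, Complex.add_im, Complex.mul_re, Complex.mul_im,
      Complex.ofReal_re, Complex.ofReal_im, Complex.I_re, Complex.I_im,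
      Complex.natCast_re, Complex.natCast_im]
    ring
  rw [key, hPQ, hxy]
  have h2 : n ^ e * n ^ (e - 1) * n = (n ^ e) ^ 2 := by
    rw [sq, ← Real.rpow_add hn, ← Real.rpow_add_one hn.ne', ← Real.rpow_add hn]
    congr 1; ring
  rw [h2]
  have h3 : (n ^ e) ^ 2 = n ^ (2 * e) := by
    rw [sq, ← Real.rpow_add hn]; congr 1; ring
  rw [h3]
  have hcast : ((m - 1 : ℕ) : ℝ) = (m : ℝ) - 1 := by
    have : 1 ≤ m := by omega
    push_cast [this]; ring
  have habs : ‖z‖ ^ (2 * ((m : ℝ) - K) / K) = n ^ (((m : ℝ) - K) / K) := by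
    rw [Complex.norm_def, ← hn_def, Real.sqrt_eq_rpow, ← Real.rpow_mul hn.le]
    congr 1; ring
  rw [habs]
  have hfact : n ^ ((m - 1 : ℕ) : ℝ) * ((m : ℝ) ^ 2 * n ^ (2 * e) + 2 * e * (m : ℝ) * n ^ (2 * e))
      = ((m : ℝ) ^ 2 + 2 * e * (m : ℝ)) * n ^ (((m - 1 : ℕ) : ℝ) + 2 * e) := by
    rw [Real.rpow_add hn]; ring
  rw [hfact, hcast]
  have hexp : (m : ℝ) - 1 + 2 * e = ((m : ℝ) - K) / K := by
    rw [he_def]; field_simp; ring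
  have hcoef : (m : ℝ) ^ 2 + 2 * e * (m : ℝ) = (m : ℝ) ^ 2 / K := by
    rw [he_def]; field_simp; ring
  rw [hexp, hcoef]
end

section
/- Fix an integer m ≥ 2 and a real number K with 1 ≤ K < m, and define f : ℂ → ℂ by f(0) = 0 and f(z) = z^m |z|^{−m(K−1)/K} for z ≠ 0. Then for every z ∈ ℂ with z ≠ 0, the operator norm of the real derivative satisfies ‖Df(z)‖ = m · |z|^{m/K − 1}, and consequently the distortion identity ‖Df(z)‖² = K · det Df(z) holds; in particular f is K-quasiregular on the unit disk. -/
open Metric Set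

lemma det_aux' (A B : ℂ) :
    ((A • ContinuousLinearMap.id ℝ ℂ + B • (Complex.conjCLE : ℂ →L[ℝ] ℂ)) :
      ℂ →L[ℝ] ℂ).det = Complex.normSq A - Complex.normSq B := by
  rw [ContinuousLinearMap.det, ← LinearMap.det_toMatrix Complex.basisOneI]
  rw [Matrix.det_fin_two]
  simp [LinearMap.toMatrix_apply, Complex.coe_basisOneI, Complex.normSq_apply,
    Complex.conjCLE_apply]
  ring

/-- Example 4.1 of the paper: for `f(z) = z^m |z|^{−m(K−1)/K}` the operator norm of the
real derivative is `m|z|^{m/K−1}` at every `z ≠ 0`, and the distortion identity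
`‖Df(z)‖² = K · det Df(z)` holds, so `f` is `K`-quasiregular. -/
theorem distortion_of_sharpness_example
    (m : ℕ) (hm : 2 ≤ m) (K : ℝ) (hK1 : 1 ≤ K) (hKm : K < m)
    (f : ℂ → ℂ) (hf0 : f 0 = 0)
    (hf : ∀ z : ℂ, z ≠ 0 →
      f z = z ^ m * ((‖z‖ ^ (-((m : ℝ) * (K - 1) / K)) : ℝ) : ℂ)) :
    ∀ z : ℂ, z ≠ 0 →
      ‖fderiv ℝ f z‖ = (m : ℝ) * ‖z‖ ^ ((m : ℝ) / K - 1) ∧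
      ‖fderiv ℝ f z‖ ^ 2 = K * (fderiv ℝ f z).det := by
  intro z hz
  have hK0 : (0:ℝ) < K := lt_of_lt_of_le one_pos hK1
  have hm1 : (1:ℕ) ≤ m := le_trans one_le_two hm
  set b : ℝ := -((m : ℝ) * (K - 1) / K) with hbdef
  have hb : b = (m : ℝ) / K - m := by
    rw [hbdef]; field_simp; ring
  have hble : b ≤ 0 := by
    rw [hb]
    have h1 : (m : ℝ) / K ≤ (m : ℝ) := by
      rw [div_le_iff₀ hK0]
      nlinarith [Nat.cast_nonneg (α := ℝ) m]
    linarith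
  set s : ℝ := ‖z‖ with hsdef
  have hs : 0 < s := by rw [hsdef]; exact norm_pos_iff.mpr hz
  have hsn : (0:ℝ) ≤ s := hs.le
  have hnsq : Complex.normSq z = s ^ (2:ℝ) := by
    rw [← Complex.sq_norm, ← hsdef, ← Real.rpow_natCast s 2]
    norm_num
  have hNz : z.re * z.re + z.im * z.im = s ^ (2:ℝ) := by
    rw [← Complex.normSq_apply]; exact hnsq
  have hNpos : z.re * z.re + z.im * z.im ≠ 0 := by rw [hNz]; positivity
  set c1 : ℝ := s ^ b with hc1def
  set c2 : ℝ := s ^ (b - 2) with hc2def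
  have hc1pos : 0 < c1 := by rw [hc1def]; exact Real.rpow_pos_of_pos hs b
  have hc2pos : 0 < c2 := by rw [hc2def]; exact Real.rpow_pos_of_pos hs _
  have hc1N : (z.re * z.re + z.im * z.im) ^ (b / 2) = c1 := by
    rw [hNz, ← Real.rpow_mul hsn, show (2:ℝ) * (b / 2) = b by ring, hc1def]
  have hc2N : (z.re * z.re + z.im * z.im) ^ (b / 2 - 1) = c2 := by
    rw [hNz, ← Real.rpow_mul hsn, show (2:ℝ) * (b / 2 - 1) = b - 2 by ring, hc2def]
  have hc21 : c2 * s ^ (2:ℝ) = c1 := by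
    rw [hc1def, hc2def, ← Real.rpow_add hs]; norm_num
  have hcoef : 0 ≤ (m : ℝ) + b / 2 := by
    rw [hb]
    have h0 : 0 ≤ (m : ℝ) / K := by positivity
    linarith
  set A : ℂ := (((m : ℝ) + b / 2 : ℝ) : ℂ) * z ^ (m - 1) * ((c1 : ℝ) : ℂ) with hAdef
  set B : ℂ := ((b / 2 : ℝ) : ℂ) * z ^ (m + 1) * ((c2 : ℝ) : ℂ) with hBdef
  set D : ℂ →L[ℝ] ℂ :=
    A • ContinuousLinearMap.id ℝ ℂ + B • (Complex.conjCLE : ℂ →L[ℝ] ℂ) with hDdef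
  clear_value b s c1 c2 A B D
  have hDapp : ∀ v : ℂ, D v = A * v + B * (starRingEnd ℂ) v := by
    intro v
    rw [hDdef]
    simp [ContinuousLinearMap.add_apply, ContinuousLinearMap.smul_apply,
      ContinuousLinearMap.id_apply, ContinuousLinearEquiv.coe_coe,
      Complex.conjCLE_apply, smul_eq_mul]
  have hzm : z ^ m = z ^ (m - 1) * z := by
    rw [← pow_succ]; congr 1; omega
  have hzm1 : z ^ (m + 1) = z ^ (m - 1) * z * z := by
    rw [← pow_succ, ← pow_succ]; congr 1; omega
  have E7 : z * (starRingEnd ℂ) z = ((s ^ (2:ℝ) : ℝ) : ℂ) := by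
    rw [Complex.mul_conj, hnsq]
  have E3 : ((c2 : ℝ) : ℂ) * ((s ^ (2:ℝ) : ℝ) : ℂ) = ((c1 : ℝ) : ℂ) := by
    rw [← Complex.ofReal_mul, hc21]
  -- the derivative
  have hre : HasFDerivAt (fun w : ℂ => w.re) Complex.reCLM z := Complex.reCLM.hasFDerivAt
  have him : HasFDerivAt (fun w : ℂ => w.im) Complex.imCLM z := Complex.imCLM.hasFDerivAt
  have hN : HasFDerivAt (fun w : ℂ => w.re * w.re + w.im * w.im)
      ((z.re • Complex.reCLM + z.re • Complex.reCLM) +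
        (z.im • Complex.imCLM + z.im • Complex.imCLM)) z :=
    (hre.mul hre).add (him.mul him)
  have hrpow : HasFDerivAt (fun w : ℂ => (w.re * w.re + w.im * w.im) ^ (b / 2))
      ((b / 2 * (z.re * z.re + z.im * z.im) ^ (b / 2 - 1)) •
        ((z.re • Complex.reCLM + z.re • Complex.reCLM) +
          (z.im • Complex.imCLM + z.im • Complex.imCLM))) z :=
    hN.rpow_const (Or.inl hNpos)
  have hcast : HasFDerivAt
      (fun w : ℂ => (((w.re * w.re + w.im * w.im) ^ (b / 2) : ℝ) : ℂ))
      (Complex.ofRealCLM.comp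
        ((b / 2 * (z.re * z.re + z.im * z.im) ^ (b / 2 - 1)) •
          ((z.re • Complex.reCLM + z.re • Complex.reCLM) +
            (z.im • Complex.imCLM + z.im • Complex.imCLM)))) z :=
    Complex.ofRealCLM.hasFDerivAt.comp z hrpow
  have hpow : HasFDerivAt (fun w : ℂ => w ^ m)
      ((ContinuousLinearMap.smulRight (1 : ℂ →L[ℂ] ℂ) ((m : ℂ) * z ^ (m - 1))).restrictScalars ℝ)
      z :=
    (hasDerivAt_pow m z).hasFDerivAt.restrictScalars ℝ
  have hg : HasFDerivAt
      (fun w : ℂ => w ^ m * (((w.re * w.re + w.im * w.im) ^ (b / 2) : ℝ) : ℂ))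
      (z ^ m • (Complex.ofRealCLM.comp
        ((b / 2 * (z.re * z.re + z.im * z.im) ^ (b / 2 - 1)) •
          ((z.re • Complex.reCLM + z.re • Complex.reCLM) +
            (z.im • Complex.imCLM + z.im • Complex.imCLM)))) +
        (((z.re * z.re + z.im * z.im) ^ (b / 2) : ℝ) : ℂ) •
          ((ContinuousLinearMap.smulRight (1 : ℂ →L[ℂ] ℂ)
            ((m : ℂ) * z ^ (m - 1))).restrictScalars ℝ)) z :=
    hpow.mul hcast
  have hfg : f =ᶠ[nhds z] fun w : ℂ =>
      w ^ m * (((w.re * w.re + w.im * w.im) ^ (b / 2) : ℝ) : ℂ) := by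
    filter_upwards [compl_singleton_mem_nhds hz] with w hw
    have hw0 : w ≠ 0 := hw
    have hw2 : ‖w‖ ^ b = (w.re * w.re + w.im * w.im) ^ (b / 2) := by
      rw [← Complex.normSq_apply, ← Complex.sq_norm,
        ← Real.rpow_natCast ‖w‖ 2, ← Real.rpow_mul (norm_nonneg w)]
      ring_nf
    rw [hf w hw0, hw2]
  have hDf := hg.congr_of_eventuallyEq hfg
  have key : fderiv ℝ f z = D := by
    rw [hDf.fderiv]
    ext v
    rw [hDapp v]
    have E8 : (starRingEnd ℂ) z * v + z * (starRingEnd ℂ) v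
        = 2 * ((z.re : ℝ) : ℂ) * ((v.re : ℝ) : ℂ) +
          2 * ((z.im : ℝ) : ℂ) * ((v.im : ℝ) : ℂ) := by
      apply Complex.ext <;> simp [Complex.mul_re, Complex.mul_im] <;> ring
    simp only [ContinuousLinearMap.add_apply, ContinuousLinearMap.smul_apply,
      ContinuousLinearMap.coe_comp', Function.comp_apply, Complex.ofRealCLM_apply,
      ContinuousLinearMap.coe_restrictScalars', ContinuousLinearMap.smulRight_apply,
      ContinuousLinearMap.one_apply, Complex.reCLM_apply, Complex.imCLM_apply,
      smul_eq_mul]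
    rw [hc1N, hc2N, hzm, hAdef, hBdef, hzm1]
    push_cast
    linear_combination
      (-(((b : ℝ) : ℂ) / 2) * z ^ (m - 1) * z * ((c2 : ℝ) : ℂ)) * E8 +
      ((((b : ℝ) : ℂ)) / 2 * z ^ (m - 1) * v * ((c2 : ℝ) : ℂ)) * E7 +
      ((((b : ℝ) : ℂ)) / 2 * z ^ (m - 1) * v) * E3
  have normA : ‖A‖ = ((m : ℝ) + b / 2) * s ^ ((m : ℝ) / K - 1) := by
    rw [hAdef, norm_mul, norm_mul, norm_pow, Complex.norm_real, Complex.norm_real,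
      Real.norm_eq_abs, Real.norm_eq_abs,
      abs_of_nonneg hcoef, abs_of_pos hc1pos, ← hsdef, hc1def,
      ← Real.rpow_natCast s (m - 1), mul_assoc, ← Real.rpow_add hs]
    congr 1
    rw [Nat.cast_sub hm1, hb]
    push_cast
    ring
  have normB : ‖B‖ = (-(b / 2)) * s ^ ((m : ℝ) / K - 1) := by
    rw [hBdef, norm_mul, norm_mul, norm_pow, Complex.norm_real, Complex.norm_real,
      Real.norm_eq_abs, Real.norm_eq_abs,
      abs_of_nonpos (by linarith : b / 2 ≤ 0), abs_of_pos hc2pos, ← hsdef, hc2def,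
      ← Real.rpow_natCast s (m + 1), mul_assoc, ← Real.rpow_add hs]
    rw [show -(b / 2) * s ^ ((m : ℝ) / K - 1) = -(b / 2) * s ^ ((m : ℝ) / K - 1) from rfl]
    congr 1
    push_cast
    rw [hb]
    ring
  have hexp3 : s ^ (m - 1) * s * s ^ b = s ^ ((m : ℝ) / K) := by
    rw [← Real.rpow_natCast s (m - 1),
      show s ^ ((m - 1 : ℕ) : ℝ) * s * s ^ b
        = s ^ ((m - 1 : ℕ) : ℝ) * s ^ (1:ℝ) * s ^ b by rw [Real.rpow_one],
      ← Real.rpow_add hs, ← Real.rpow_add hs]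
    congr 1
    rw [Nat.cast_sub hm1, hb]
    push_cast
    ring
  have hnormD : ‖D‖ = (m : ℝ) * s ^ ((m : ℝ) / K - 1) := by
    apply le_antisymm
    · refine D.opNorm_le_bound (by positivity) fun v => ?_
      rw [hDapp v]
      calc ‖A * v + B * (starRingEnd ℂ) v‖
          ≤ ‖A * v‖ + ‖B * (starRingEnd ℂ) v‖ := norm_add_le _ _
        _ = (‖A‖ + ‖B‖) * ‖v‖ := by
            simp [norm_mul, Complex.norm_conj]
            ring
        _ = (m : ℝ) * s ^ ((m : ℝ) / K - 1) * ‖v‖ := by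
            rw [normA, normB]; ring
    · have h2 : D (Complex.I * z) = Complex.I * (m : ℂ) * (z ^ (m - 1) * z) * ((c1 : ℝ) : ℂ) := by
        rw [hDapp, map_mul, Complex.conj_I, hAdef, hBdef, hzm1]
        push_cast
        linear_combination
          (-(((b : ℝ) : ℂ) / 2) * z ^ (m - 1) * Complex.I * z * ((c2 : ℝ) : ℂ)) * E7 +
          (-(((b : ℝ) : ℂ) / 2) * z ^ (m - 1) * Complex.I * z) * E3
      have h3 : ‖D (Complex.I * z)‖ = (m : ℝ) * s ^ ((m : ℝ) / K) := by
        rw [h2]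
        simp only [norm_mul, norm_pow, Complex.norm_I,
          Complex.norm_natCast, Complex.norm_real, Real.norm_eq_abs, one_mul, ← hsdef]
        rw [abs_of_pos hc1pos, hc1def, ← hexp3]
        ring
      have h4 := D.le_opNorm (Complex.I * z)
      rw [h3] at h4
      have h5 : ‖Complex.I * z‖ = s := by
        rw [norm_mul]
        simp [Complex.norm_I, ← hsdef]
      rw [h5] at h4
      rw [show (m : ℝ) * s ^ ((m : ℝ) / K - 1) = ((m : ℝ) * s ^ ((m : ℝ) / K)) / s by
        rw [Real.rpow_sub hs, Real.rpow_one]; ring]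
      rw [div_le_iff₀ hs]
      exact h4
  have hdet : D.det = ‖A‖ ^ 2 - ‖B‖ ^ 2 := by
    rw [hDdef, det_aux', ← Complex.sq_norm, ← Complex.sq_norm]
  rw [key]
  refine ⟨hnormD, ?_⟩
  rw [hnormD, hdet, normA, normB, hb]
  field_simp
  ring
end
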